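/- The residue of a product satisfies: Res(AB) − Res(BA) = (T−1)(c) for some explicit c, where for A = ∑ a_i T^i and B = ∑ b_j T^j one has Res(AB) = ∑_i a_i T^i(b_{-i}) and Res(BA) = ∑_i b_{-i} T^{-i}(a_i), and each difference a_i T^i(b_{-i}) − b_{-i} T^{-i}(a_i) equals (T^i − 1)(T^{-i}(a_i)·b_{-i}). -/

import Mathlib

/-- Twisted multiplication of (finitely supported) Laurent polynomials in the
shift operator `T`: `(aT^i)·(bT^j) = a·T^i(b)·T^{i+j}`, extended bilinearly. -/
noncomputable def tmul {R : Type*} [CommRing R] (T : R ≃+* R) (A B : ℤ →₀ R) : ℤ →₀ R :=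
  A.sum fun i a => B.sum fun j b => Finsupp.single (i + j) (a * (T ^ i) b)

lemma tmul_coeff_zero {R : Type*} [CommRing R] (T : R ≃+* R) (A B : ℤ →₀ R) :
    (tmul T A B) 0 = ∑ i ∈ A.support, A i * (T ^ i) (B (-i)) := by
  rw [tmul]
  simp only [Finsupp.sum_apply, Finsupp.sum, Finset.sum_apply', Finsupp.single_apply]
  refine Finset.sum_congr rfl fun i hi => ?_
  rw [Finset.sum_eq_single (-i)]
  · simp
  · intro j hj hne
    exact if_neg (by omega)
  · intro h
    rw [Finsupp.notMem_support_iff.mp h]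
    simp

lemma tmul_coeff_zero' {R : Type*} [CommRing R] (T : R ≃+* R) (A B : ℤ →₀ R) :
    (tmul T B A) 0 = ∑ i ∈ A.support, B (-i) * (T ^ (-i)) (A i) := by
  rw [tmul]
  simp only [Finsupp.sum_apply, Finsupp.sum, Finset.sum_apply', Finsupp.single_apply]
  rw [Finset.sum_comm]
  refine Finset.sum_congr rfl fun i hi => ?_
  rw [Finset.sum_eq_single (-i)]
  · simp
  · intro j hj hne
    exact if_neg (by omega)
  · intro h
    rw [Finsupp.notMem_support_iff.mp h]
    simp

lemma zpow_sub_self_mem {R : Type*} [CommRing R] (T : R ≃+* R) (i : ℤ) (x : R) :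
    ∃ c : R, (T ^ i) x - x = T c - c := by
  induction i using Int.induction_on generalizing x with
  | zero =>
    refine ⟨0, ?_⟩
    rw [show ((T ^ (0 : ℤ)) x) = x from rfl, map_zero]
    ring
  | succ n ih =>
    obtain ⟨c, hc⟩ := ih x
    refine ⟨(T ^ (n : ℤ)) x + c, ?_⟩
    have h1 : (T ^ ((n : ℤ) + 1)) x = T ((T ^ (n : ℤ)) x) := by
      rw [show ((n : ℤ) + 1) = 1 + n by ring, zpow_add, zpow_one]
      rfl
    rw [h1, map_add]
    linear_combination hc
  | pred n ih =>
    obtain ⟨c, hc⟩ := ih ((T ^ (-1 : ℤ)) x)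
    refine ⟨c - (T ^ (-1 : ℤ)) x, ?_⟩
    have h1 : (T ^ (-(n : ℤ) - 1)) x = (T ^ (-(n : ℤ))) ((T ^ (-1 : ℤ)) x) := by
      rw [show (-(n : ℤ) - 1) = (-(n : ℤ)) + (-1) by ring, zpow_add]
      rfl
    have h2 : T ((T ^ (-1 : ℤ)) x) = x := by
      have h3 : (T ^ (1 : ℤ)) ((T ^ (-1 : ℤ)) x) = (T ^ ((1 : ℤ) + (-1))) x := by
        rw [zpow_add]
        rfl
      rw [zpow_one] at h3
      rw [h3]
      norm_num
    rw [h1, map_sub, h2]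
    linear_combination hc

lemma sum_mem_image {R : Type*} [CommRing R] (T : R ≃+* R) (s : Finset ℤ) (f : ℤ → R)
    (h : ∀ i ∈ s, ∃ c : R, f i = T c - c) :
    ∃ c : R, ∑ i ∈ s, f i = T c - c := by
  classical
  revert h
  induction s using Finset.induction_on with
  | empty => exact fun _ => ⟨0, by simp⟩
  | @insert a t hx ih =>
    intro h
    obtain ⟨c1, hc1⟩ := h a (Finset.mem_insert_self a t)
    obtain ⟨c2, hc2⟩ := ih fun i hi => h i (Finset.mem_insert_of_mem hi)
    refine ⟨c1 + c2, ?_⟩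
    rw [Finset.sum_insert hx, hc1, hc2, map_add]
    ring

theorem residue_of_product_difference
    {R : Type*} [CommRing R] (T : R ≃+* R) (A B : ℤ →₀ R) :
    ((tmul T A B) 0 = ∑ i ∈ A.support, A i * (T ^ i) (B (-i))) ∧
    ((tmul T B A) 0 = ∑ i ∈ A.support, B (-i) * (T ^ (-i)) (A i)) ∧
    (∀ (i : ℤ) (a b : R),
      a * (T ^ i) b - b * (T ^ (-i)) a
        = (T ^ i) ((T ^ (-i)) a * b) - (T ^ (-i)) a * b) ∧
    (∃ c : R, (tmul T A B) 0 - (tmul T B A) 0 = T c - c) := by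
  have key3 : ∀ (i : ℤ) (a b : R),
      a * (T ^ i) b - b * (T ^ (-i)) a
        = (T ^ i) ((T ^ (-i)) a * b) - (T ^ (-i)) a * b := by
    intro i a b
    have h1 : (T ^ i) ((T ^ (-i)) a) = a := by
      have h3 : (T ^ i) ((T ^ (-i)) a) = (T ^ (i + (-i))) a := by
        rw [zpow_add]
        rfl
      rw [h3]
      simp only [add_neg_cancel, zpow_zero]
      rfl
    rw [map_mul, h1]
    ring
  refine ⟨tmul_coeff_zero T A B, tmul_coeff_zero' T A B, key3, ?_⟩
  rw [tmul_coeff_zero T A B, tmul_coeff_zero' T A B, ← Finset.sum_sub_distrib]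
  exact sum_mem_image T _ _ fun i _ => by
    rw [key3 i (A i) (B (-i))]
    exact zpow_sub_self_mem T i ((T ^ (-i)) (A i) * B (-i))
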